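/- (Cyclic vector theorem.) Let R be a field of characteristic 0 and let d : R → R be a nonzero derivation (an additive map satisfying d(rs) = r·d(s) + s·d(r)). Let M be a differential module over (R, d) of dimension n. Then M admits a cyclic vector, i.e., there exists v ∈ M such that v, D(v), …, D^{n−1}(v) form an R-basis of M. -/

import Mathlib

set_option linter.unusedSectionVars false
set_option maxHeartbeats 1000000
open Finset Function

section T
variable {R : Type*} [Field R] [CharZero R]
variable {M : Type*} [AddCommGroup M] [Module R M]

section basicd
variable (d : R →+ R) (hleib : ∀ r s : R, d (r * s) = r * d s + s * d r)

include hleib in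
lemma d_one : d 1 = 0 := by
  have h := hleib 1 1
  simp only [mul_one, one_mul] at h
  have h2 : d 1 + 0 = d 1 + d 1 := by rw [add_zero]; exact h
  exact (add_left_cancel h2).symm

include hleib in
lemma d_nat (N : ℕ) : d (N : R) = 0 := by
  have h : ((N : R)) = (N : ℕ) • (1 : R) := by simp
  rw [h, map_nsmul, d_one d hleib, smul_zero]

include hleib in
lemma iter_d_nat_mul (l : ℕ) (N : ℕ) (r : R) : d^[l] ((N : R) * r) = (N : R) * d^[l] r := by
  induction l generalizing r with
  | zero => simp
  | succ l ih =>
    rw [Function.iterate_succ_apply, Function.iterate_succ_apply]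
    rw [hleib, d_nat d hleib, mul_zero, add_zero, ih]

end basicd

noncomputable def Cc (D : M →+ M) (w : M) : ℕ → ℕ → M
  | 0, 0 => w
  | 0, _ + 1 => 0
  | k + 1, 0 => D (Cc D w k 0)
  | k + 1, b + 1 => D (Cc D w k (b + 1)) + Cc D w k b

variable (D : M →+ M) (w : M)

lemma Cc_zero : ∀ k b : ℕ, k < b → Cc D w k b = 0
  | 0, _ + 1, _ => rfl
  | k + 1, b + 1, h => by
    rw [Cc, Cc_zero k (b+1) (by omega), Cc_zero k b (by omega), map_zero, add_zero]

lemma Cc_diag : ∀ k, Cc D w k k = w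
  | 0 => rfl
  | k + 1 => by
    rw [Cc, Cc_zero D w k (k+1) (by omega), map_zero, zero_add, Cc_diag k]

lemma Cc_subdiag : ∀ k, Cc D w (k + 1) k = (k + 1) • D w
  | 0 => by rw [Cc, Cc_diag]; simp
  | k + 1 => by
    rw [Cc, Cc_diag, Cc_subdiag k, succ_nsmul _ (k+1)]; abel

lemma Cc_expand (d : R →+ R) (hD : ∀ (r : R) (x : M), D (r • x) = d r • x + r • D x) :
    ∀ (k : ℕ) (r : R), D^[k] (r • w) = ∑ b ∈ Finset.range (k+1), d^[b] r • Cc D w k b := by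
  intro k
  induction k with
  | zero => intro r; simp [Cc]
  | succ k ih =>
    intro r
    rw [Function.iterate_succ_apply', ih, map_sum]
    have hterm : ∀ b, D (d^[b] r • Cc D w k b)
        = d^[b+1] r • Cc D w k b + d^[b] r • D (Cc D w k b) := by
      intro b
      rw [hD, Function.iterate_succ_apply' d]
    rw [Finset.sum_congr rfl fun b _ => hterm b, Finset.sum_add_distrib]
    rw [Finset.sum_range_succ' (fun b => d^[b] r • Cc D w (k+1) b) (k+1)]
    simp only [Cc, Function.iterate_zero_apply, smul_add]
    rw [Finset.sum_add_distrib]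
    rw [Finset.sum_range_succ (fun b => d^[b+1] r • D (Cc D w k (b+1))) k]
    rw [Cc_zero D w k (k+1) (by omega), map_zero, smul_zero, add_zero]
    rw [Finset.sum_range_succ' (fun b => d^[b] r • D (Cc D w k b)) k]
    simp only [Function.iterate_zero_apply]
    abel

/-- Independence of the iterates of a nonzero derivation in characteristic zero. -/
lemma IND (d : R →+ R) (hleib : ∀ r s : R, d (r * s) = r * d s + s * d r) (hd : d ≠ 0) :
    ∀ (m : ℕ) (u : ℕ → R), (∀ r, ∑ i ∈ Finset.range (m+1), u i * d^[i] r = 0) → u m = 0 := by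
  have hDs : ∀ r x : R, d (r • x) = d r • x + r • d x := by
    intro r x
    rw [smul_eq_mul, hleib r x, smul_eq_mul, smul_eq_mul]; ring
  obtain ⟨s, hs⟩ : ∃ s, d s ≠ 0 := by
    by_contra hc
    push_neg at hc
    exact hd (DFunLike.ext _ _ fun x => by rw [hc x]; rfl)
  intro m
  induction m with
  | zero =>
    intro u H
    have := H 1
    simpa using this
  | succ m ih =>
    intro u H
    set g : ℕ → ℕ → R := fun i b => if b < i then Cc (M := R) d s i b else 0 with hgdef
    have key : ∀ r : R, ∑ b ∈ Finset.range (m+1),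
        (fun b => ∑ i ∈ Finset.range (m+2), u i * g i b) b * d^[b] r = 0 := by
      intro r
      have hexp : ∀ i : ℕ, d^[i] (r * s)
          = (∑ b ∈ Finset.range i, d^[b] r * Cc (M := R) d s i b) + d^[i] r * s := by
        intro i
        have h := Cc_expand (M := R) d s d hDs i r
        rw [smul_eq_mul] at h
        rw [Finset.sum_range_succ, Cc_diag] at h
        simpa [smul_eq_mul] using h
      have h1 : ∑ i ∈ Finset.range (m+2), u i * d^[i] (r * s) = 0 := H (r * s)
      have h2 : ∑ i ∈ Finset.range (m+2), u i * (d^[i] r * s) = 0 := by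
        have := H r
        calc ∑ i ∈ Finset.range (m+2), u i * (d^[i] r * s)
            = (∑ i ∈ Finset.range (m+2), u i * d^[i] r) * s := by
              rw [Finset.sum_mul]; exact Finset.sum_congr rfl fun i _ => by ring
          _ = 0 := by rw [this, zero_mul]
      simp only [hexp, mul_add] at h1
      rw [Finset.sum_add_distrib, h2, add_zero] at h1
      have h4 : ∀ i ∈ Finset.range (m+2),
          u i * (∑ b ∈ Finset.range i, d^[b] r * Cc (M := R) d s i b)
          = ∑ b ∈ Finset.range (m+1), u i * g i b * d^[b] r := by
        intro i hi
        rw [Finset.mul_sum]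
        have step1 : ∑ b ∈ Finset.range i, u i * (d^[b] r * Cc (M := R) d s i b)
            = ∑ b ∈ Finset.range i, u i * g i b * d^[b] r := by
          refine Finset.sum_congr rfl fun b hb => ?_
          rw [hgdef]
          simp only [if_pos (Finset.mem_range.mp hb)]
          ring
        rw [step1]
        refine Finset.sum_subset ?_ ?_
        · intro b hb
          simp only [Finset.mem_range] at *
          omega
        · intro b _ hb
          have : ¬ b < i := by simp only [Finset.mem_range] at hb; omega
          rw [hgdef]
          simp only [if_neg this, mul_zero, zero_mul]
      rw [Finset.sum_congr rfl h4, Finset.sum_comm] at h1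
      rw [← h1]
      refine Finset.sum_congr rfl fun b _ => ?_
      rw [Finset.sum_mul]
    have hm := ih (fun b => ∑ i ∈ Finset.range (m+2), u i * g i b) key
    have hm2 : ∑ i ∈ Finset.range (m+2), u i * g i m = u (m+1) * ((m+1 : ℕ) • d s) := by
      rw [Finset.sum_eq_single (m+1)]
      · rw [hgdef]; simp only [if_pos (by omega : m < m + 1)]
        rw [Cc_subdiag]
      · intro i hi hne
        have : ¬ m < i := by simp only [Finset.mem_range] at hi; omega
        rw [hgdef]; simp only [if_neg this, mul_zero]
      · intro h; exact absurd (Finset.mem_range.mpr (by omega)) h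
    rw [hm2] at hm
    rcases mul_eq_zero.mp hm with h | h
    · exact h
    · exfalso
      rw [nsmul_eq_mul] at h
      rcases mul_eq_zero.mp h with h' | h'
      · have : (m+1 : ℕ) = 0 := by exact_mod_cast h'
        omega
      · exact hs h'

end T


section T2
variable {R : Type*} [Field R] [CharZero R]
variable {M : Type*} [AddCommGroup M] [Module R M]

lemma exists_alternating {q : ℕ} (y : Fin q → M) (hy : LinearIndependent R y) :
    ∃ F : M [⋀^Fin q]→ₗ[R] R, F y = 1 := by
  classical
  set W := Submodule.span R (Set.range y) with hW
  obtain ⟨Q, hQ⟩ := Submodule.exists_isCompl W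
  let π : M →ₗ[R] W := W.linearProjOfIsCompl Q hQ
  let B : Module.Basis (Fin q) R W := Module.Basis.span hy
  let g : M →ₗ[R] (Fin q → R) := LinearMap.pi fun i => (B.coord i).comp π
  refine ⟨(Matrix.detRowAlternating).compLinearMap g, ?_⟩
  rw [AlternatingMap.compLinearMap_apply]
  have hmat : (fun i => g (y i)) = (1 : Matrix (Fin q) (Fin q) R) := by
    funext i j
    have hyW : y i ∈ W := Submodule.subset_span (Set.mem_range_self i)
    have hπ : π (y i) = ⟨y i, hyW⟩ :=
      Submodule.linearProjOfIsCompl_apply_left hQ ⟨y i, hyW⟩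
    have hBi : B i = ⟨y i, hyW⟩ := Module.Basis.span_apply hy i
    show (B.coord j) (π (y i)) = (1 : Matrix (Fin q) (Fin q) R) i j
    rw [hπ, ← hBi, Module.Basis.coord_apply, Module.Basis.repr_self, Matrix.one_apply]
    rw [Finsupp.single_apply]
  rw [hmat]
  exact Matrix.det_one

lemma pieces {ι : Type*} [DecidableEq ι] [Fintype ι]
    (f : MultilinearMap R (fun _ : ι => M) R) (c : R) (bb : ι → M) (s : Finset ι) :
    ∀ a : ι → M, f (s.piecewise (fun i => c • bb i) a) = c ^ s.card • f (s.piecewise bb a) := by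
  induction s using Finset.induction_on with
  | empty => intro a; simp
  | insert j s hj ih =>
    intro a
    have hup : ∀ (g : ι → M) (x : M),
        update (s.piecewise g a) j x = s.piecewise g (update a j x) := by
      intro g x
      funext i
      by_cases hij : i = j
      · subst hij
        rw [update_self, Finset.piecewise_eq_of_notMem _ _ _ hj, update_self]
      · rw [update_of_ne hij]
        by_cases his : i ∈ s
        · rw [Finset.piecewise_eq_of_mem _ _ _ his, Finset.piecewise_eq_of_mem _ _ _ his]
        · rw [Finset.piecewise_eq_of_notMem _ _ _ his,
            Finset.piecewise_eq_of_notMem _ _ _ his, update_of_ne hij]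
    rw [Finset.piecewise_insert, Finset.piecewise_insert]
    rw [f.map_update_smul (s.piecewise (fun i => c • bb i) a) j c (bb j)]
    rw [hup, hup, ih (update a j (bb j))]
    rw [← hup bb (bb j)]
    rw [Finset.card_insert_of_notMem hj, pow_succ, smul_smul, mul_comm]

lemma stepA {q : ℕ} (F : M [⋀^Fin q]→ₗ[R] R) (a bb : Fin q → M)
    (H : ∀ N : ℕ, F (fun i => a i + (N : R) • bb i) = 0) :
    ∑ k : Fin q, F (Function.update a k (bb k)) = 0 := by
  classical
  set p : Polynomial R :=
    ∑ s : Finset (Fin q), Polynomial.C (F (s.piecewise bb a)) * Polynomial.X ^ s.card with hp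
  have hev : ∀ N : ℕ, p.eval ((N : R)) = 0 := by
    intro N
    have h0 := H N
    have hfun : (fun i => a i + (N : R) • bb i) = (fun i => (N : R) • bb i) + a := by
      funext i; simp [Pi.add_apply, add_comm]
    rw [hfun] at h0
    have hexp := F.toMultilinearMap.map_add_univ (fun i => (N : R) • bb i) a
    have hterm : ∀ s : Finset (Fin q),
        F.toMultilinearMap (s.piecewise (fun i => (N : R) • bb i) a)
        = (N : R) ^ s.card • F.toMultilinearMap (s.piecewise bb a) :=
      fun s => pieces F.toMultilinearMap ((N : R)) bb s a
    rw [hp]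
    rw [Polynomial.eval_finset_sum]
    simp only [Polynomial.eval_mul, Polynomial.eval_C, Polynomial.eval_pow, Polynomial.eval_X]
    have : F.toMultilinearMap ((fun i => (N : R) • bb i) + a) = 0 := h0
    rw [hexp] at this
    rw [← this]
    refine Finset.sum_congr rfl fun s _ => ?_
    rw [hterm s, smul_eq_mul, mul_comm]
    rfl
  have hp0 : p = 0 := by
    apply Polynomial.eq_zero_of_infinite_isRoot
    apply Set.Infinite.mono (s := Set.range ((↑) : ℕ → R))
    · rintro x ⟨N, rfl⟩
      exact hev N
    · exact Set.infinite_range_of_injective Nat.cast_injective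
  have hc : p.coeff 1 = 0 := by rw [hp0]; simp
  rw [hp, Polynomial.finset_sum_coeff] at hc
  simp only [Polynomial.coeff_C_mul_X_pow] at hc
  have h5 : ∑ k : Fin q, F (Function.update a k (bb k))
      = ∑ s ∈ Finset.univ.powersetCard 1, F (s.piecewise bb a) := by
    rw [Finset.powersetCard_one, Finset.sum_map]
    refine Finset.sum_congr rfl fun k _ => ?_
    rw [Function.Embedding.coeFn_mk, Finset.piecewise_singleton]
  rw [h5, Finset.powersetCard_eq_filter, Finset.powerset_univ, Finset.sum_filter]
  calc (∑ s : Finset (Fin q), if #s = 1 then F (s.piecewise bb a) else 0)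
      = ∑ s : Finset (Fin q), if 1 = #s then F (s.piecewise bb a) else 0 := by
        refine Finset.sum_congr rfl fun s _ => ?_
        by_cases h : #s = 1
        · rw [if_pos h, if_pos h.symm]
        · rw [if_neg h, if_neg fun hh => h hh.symm]
    _ = 0 := hc

end T2


section CyclicAux
variable {R : Type*} [Field R] [CharZero R]
variable {M : Type*} [AddCommGroup M] [Module R M]

lemma exists_indep
    (d : R →+ R) (hleib : ∀ r s : R, d (r * s) = r * d s + s * d r) (hd : d ≠ 0)
    [FiniteDimensional R M]
    (D : M →+ M) (hD : ∀ (r : R) (x : M), D (r • x) = d r • x + r • D x) :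
    ∀ k : ℕ, k ≤ Module.finrank R M →
      ∃ v : M, LinearIndependent R (fun i : Fin k => (⇑D)^[(i : ℕ)] v) := by
  intro k
  induction k with
  | zero => exact fun _ => ⟨0, linearIndependent_empty_type⟩
  | succ k ih =>
    intro hk
    obtain ⟨v, hv⟩ := ih (by omega)
    by_cases hex : ∃ u : M, LinearIndependent R (fun i : Fin (k+1) => (⇑D)^[(i : ℕ)] u)
    · exact hex
    exfalso
    push_neg at hex
    classical
    obtain ⟨w, hw⟩ : ∃ w, w ∉ Submodule.span R (Set.range fun i : Fin k => (⇑D)^[(i : ℕ)] v) := by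
      by_contra hc
      push_neg at hc
      have htop : Submodule.span R (Set.range fun i : Fin k => (⇑D)^[(i : ℕ)] v) = ⊤ :=
        eq_top_iff.mpr fun x _ => hc x
      have hcard := finrank_span_eq_card hv
      rw [htop, finrank_top, Fintype.card_fin] at hcard
      omega
    set y : Fin (k+1) → M := Fin.snoc (fun i : Fin k => (⇑D)^[(i : ℕ)] v) w with hy
    have hyind : LinearIndependent R y := linearIndependent_fin_snoc.mpr ⟨hv, hw⟩
    obtain ⟨F, hF1⟩ := exists_alternating y hyind
    have H0 : ∀ u : M, F (fun i : Fin (k+1) => (⇑D)^[(i : ℕ)] u) = 0 := fun u =>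
      F.map_linearDependent _ (hex u)
    set a : Fin (k+1) → M := fun i => (⇑D)^[(i : ℕ)] v with ha
    have key : ∀ r : R, ∑ l ∈ Finset.range (k+1),
        (fun l => ∑ k' : Fin (k+1), F (Function.update a k' (Cc D w (k' : ℕ) l))) l * d^[l] r
        = 0 := by
      intro r
      set bb : Fin (k+1) → M :=
        fun i => ∑ l ∈ Finset.range ((i : ℕ)+1), d^[l] r • Cc D w (i : ℕ) l with hbb
      have hA : ∀ N : ℕ, F (fun i => a i + (N : R) • bb i) = 0 := by
        intro N
        have hiter : (fun i : Fin (k+1) => (⇑D)^[(i : ℕ)] (v + ((N : R) * r) • w))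
            = fun i => a i + (N : R) • bb i := by
          funext i
          rw [iterate_map_add]
          congr 1
          rw [Cc_expand D w d hD (i : ℕ) ((N : R) * r), hbb]
          rw [Finset.smul_sum]
          refine Finset.sum_congr rfl fun l _ => ?_
          rw [iter_d_nat_mul d hleib l N r, mul_smul]
        rw [← hiter]
        exact H0 _
      have hSA := stepA F a bb hA
      have h1 : ∀ k' : Fin (k+1), F (Function.update a k' (bb k'))
          = ∑ l ∈ Finset.range (k+1), d^[l] r * F (Function.update a k' (Cc D w (k' : ℕ) l)) := by
        intro k'
        rw [hbb]
        rw [F.map_update_sum (Finset.range ((k' : ℕ)+1)) k'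
          (fun l => d^[l] r • Cc D w (k' : ℕ) l) a]
        have h2 : ∀ l ∈ Finset.range ((k' : ℕ)+1),
            F (Function.update a k' (d^[l] r • Cc D w (k' : ℕ) l))
            = d^[l] r * F (Function.update a k' (Cc D w (k' : ℕ) l)) := by
          intro l _
          rw [F.map_update_smul, smul_eq_mul]
        rw [Finset.sum_congr rfl h2]
        refine Finset.sum_subset ?_ ?_
        · intro l hl
          simp only [Finset.mem_range] at *
          have := k'.isLt
          omega
        · intro l _ hl
          have hkl : (k' : ℕ) < l := by simp only [Finset.mem_range] at hl; omega
          rw [Cc_zero D w _ _ hkl, F.map_update_zero, mul_zero]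
      rw [Finset.sum_congr rfl fun k' _ => h1 k'] at hSA
      rw [Finset.sum_comm] at hSA
      rw [← hSA]
      refine Finset.sum_congr rfl fun l _ => ?_
      rw [Finset.sum_mul]
      exact Finset.sum_congr rfl fun k' _ => mul_comm _ _
    have hl := IND d hleib hd k
      (fun l => ∑ k' : Fin (k+1), F (Function.update a k' (Cc D w (k' : ℕ) l))) key
    have hstep : ∑ k' : Fin (k+1), F (Function.update a k' (Cc D w (k' : ℕ) k))
        = F (Function.update a (Fin.last k) w) := by
      rw [Finset.sum_eq_single (Fin.last k)]
      · rw [Fin.val_last, Cc_diag]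
      · intro i _ hne
        have hik : (i : ℕ) < k := by
          have h1 := i.isLt
          have : (i : ℕ) ≠ k := fun h => hne (Fin.ext (by rw [h, Fin.val_last]))
          omega
        rw [Cc_zero D w _ _ hik, F.map_update_zero]
      · intro h
        exact absurd (Finset.mem_univ _) h
    have hupd : Function.update a (Fin.last k) w = y := by
      funext i
      refine Fin.lastCases ?_ ?_ i
      · rw [Function.update_self, hy, Fin.snoc_last]
      · intro j
        rw [Function.update_of_ne (Fin.castSucc_lt_last j).ne, ha, hy, Fin.snoc_castSucc]
        simp
    rw [hstep, hupd, hF1] at hl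
    exact one_ne_zero hl

end CyclicAux

/-- **Cyclic vector theorem.** Let `R` be a field of characteristic 0
with a nonzero derivation `d`, and let `(M, D)` be a differential module over `(R, d)`
of dimension `n`.  Then `M` admits a cyclic vector: there is `v ∈ M` such that
`v, D v, …, D^{n-1} v` form an `R`-basis of `M`. -/
theorem cyclic_vector_theorem
    {R : Type*} [Field R] [CharZero R]
    (d : R →+ R)
    (hleib : ∀ r s : R, d (r * s) = r * d s + s * d r)
    (hd : d ≠ 0)
    {M : Type*} [AddCommGroup M] [Module R M] [FiniteDimensional R M]
    (D : M →+ M)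
    (hD : ∀ (r : R) (x : M), D (r • x) = d r • x + r • D x) :
    ∃ (v : M) (b : Module.Basis (Fin (Module.finrank R M)) R M),
      ∀ i : Fin (Module.finrank R M), b i = (⇑D)^[(i : ℕ)] v := by
  rcases Nat.eq_zero_or_pos (Module.finrank R M) with h0 | hpos
  · have hsub : Subsingleton M := Module.finrank_zero_iff.mp h0
    have hie : IsEmpty (Fin (Module.finrank R M)) := ⟨fun i => absurd i.isLt (by omega)⟩
    exact ⟨0, Module.Basis.empty _, fun i => isEmptyElim i⟩
  · obtain ⟨v, hv⟩ := exists_indep d hleib hd D hD (Module.finrank R M) le_rfl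
    haveI : Nonempty (Fin (Module.finrank R M)) := ⟨⟨0, hpos⟩⟩
    have hcard : Fintype.card (Fin (Module.finrank R M)) = Module.finrank R M :=
      Fintype.card_fin _
    refine ⟨v, basisOfLinearIndependentOfCardEqFinrank hv hcard, fun i => ?_⟩
    exact congrFun (coe_basisOfLinearIndependentOfCardEqFinrank hv hcard) i
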